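/- arXiv:2208.04320 — 3 statements merged into one kernel-verified Lean document; each statement's English description precedes it below -/
import Mathlib

section
/- Let Λ be a finite nonempty type, d ≥ 1, B : Λ → Λ → Matrix (Fin d) (Fin d) ℂ with ∑_{i∈Λ} (B_j^i)ᴴ * B_j^i = 1 for every j, and let ρ : Λ → Matrix (Fin d) (Fin d) ℂ be such that every ρ_i is positive semidefinite and ∑_{i∈Λ} Tr(ρ_i) = 1. For a path (i_0, i_1, …, i_n) ∈ Λ^{n+1} set ℙ_ρ(i_0,…,i_n) := Tr(B_{i_{n-1}}^{i_n} ⋯ B_{i_1}^{i_2} B_{i_0}^{i_1} ρ_{i_0} (B_{i_0}^{i_1})ᴴ (B_{i_1}^{i_2})ᴴ ⋯ (B_{i_{n-1}}^{i_n})ᴴ). Then for every n: (a) each ℙ_ρ(i_0,…,i_n) is a nonnegative real number, and (b) ∑_{(i_0,…,i_n)∈Λ^{n+1}} ℙ_ρ(i_0,…,i_n) = 1; i.e., ℙ_ρ is a probability distribution on paths of length n. -/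
open Matrix Kronecker
open scoped ComplexOrder

/-- `pathOp B n is = B_{i_{n-1}}^{i_n} ⋯ B_{i_1}^{i_2} B_{i_0}^{i_1}`, the ordered product
of transition operators along the path `is = (i_0, …, i_n)`. -/
noncomputable def pathOp {Λ : Type*} {d : ℕ} (B : Λ → Λ → Matrix (Fin d) (Fin d) ℂ) :
    (n : ℕ) → (Fin (n + 1) → Λ) → Matrix (Fin d) (Fin d) ℂ
  | 0, _ => 1
  | n + 1, is =>
      B (is ⟨n, by omega⟩) (is ⟨n + 1, by omega⟩) * pathOp B n (fun m => is m.castSucc)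

private lemma psd_trace_nonneg {d : ℕ} {A : Matrix (Fin d) (Fin d) ℂ} (hA : A.PosSemidef) :
    0 ≤ A.trace := by
  rw [Matrix.trace]
  apply Finset.sum_nonneg
  intro i _
  exact hA.diag_nonneg

private lemma pathOp_snoc {Λ : Type*} {d : ℕ} (B : Λ → Λ → Matrix (Fin d) (Fin d) ℂ)
    (n : ℕ) (g : Fin (n + 1) → Λ) (x : Λ) :
    pathOp B (n + 1) (Fin.snoc g x) = B (g (Fin.last n)) x * pathOp B n g := by
  have h1 : (Fin.snoc g x : Fin (n+2) → Λ) ⟨n, by omega⟩ = g (Fin.last n) := by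
    simp [Fin.snoc, Fin.last, Fin.castLT]
  have h2 : (Fin.snoc g x : Fin (n+2) → Λ) ⟨n+1, by omega⟩ = x := by
    simp [Fin.snoc]
  have h3 : (fun m : Fin (n+1) => (Fin.snoc g x : Fin (n+2) → Λ) m.castSucc) = g := by
    funext m; simp
  rw [pathOp, h1, h2, h3]

/-- `ℙ_ρ(i_0,…,i_n) = Tr(B_{i_{n-1}}^{i_n} ⋯ B_{i_0}^{i_1} ρ_{i_0}
(B_{i_0}^{i_1})ᴴ ⋯ (B_{i_{n-1}}^{i_n})ᴴ)` is a probability distribution on paths: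
each value is a nonnegative real (i.e. `0 ≤ ·` in the complex order) and the values
sum to `1` over all paths of length `n`. -/
theorem stmt_2 {Λ : Type*} [Fintype Λ] [DecidableEq Λ] [Nonempty Λ] {d : ℕ} (hd : 1 ≤ d)
    (B : Λ → Λ → Matrix (Fin d) (Fin d) ℂ)
    (hB : ∀ j : Λ, ∑ i : Λ, (B j i)ᴴ * B j i = 1)
    (ρ : Λ → Matrix (Fin d) (Fin d) ℂ)
    (hρ : ∀ i, (ρ i).PosSemidef) (hTrρ : ∑ i : Λ, (ρ i).trace = 1) (n : ℕ) :
    (∀ is : Fin (n + 1) → Λ,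
        0 ≤ (pathOp B n is * ρ (is 0) * (pathOp B n is)ᴴ).trace) ∧
    ∑ is : Fin (n + 1) → Λ,
        (pathOp B n is * ρ (is 0) * (pathOp B n is)ᴴ).trace = 1 := by
  constructor
  · intro is
    exact psd_trace_nonneg ((hρ (is 0)).mul_mul_conjTranspose_same (pathOp B n is))
  · induction n with
    | zero =>
      have h : ∑ is : Fin 1 → Λ, (pathOp B 0 is * ρ (is 0) * (pathOp B 0 is)ᴴ).trace
          = ∑ i : Λ, (ρ i).trace := by
        apply Fintype.sum_equiv (Equiv.funUnique (Fin 1) Λ)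
        intro is
        rw [pathOp]
        simp
      exact h.trans hTrρ
    | succ n ih =>
      rw [← Fintype.sum_equiv (Fin.snocEquiv (fun _ => Λ))
        (fun p => (pathOp B (n+1) (Fin.snoc p.2 p.1) * ρ ((Fin.snoc p.2 p.1 : Fin (n+2) → Λ) 0)
          * (pathOp B (n+1) (Fin.snoc p.2 p.1))ᴴ).trace)
        (fun is => (pathOp B (n+1) is * ρ (is 0) * (pathOp B (n+1) is)ᴴ).trace) (by
          intro p
          rfl)]
      rw [Fintype.sum_prod_type_right]
      rw [← ih]
      apply Finset.sum_congr rfl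
      intro g _
      have hz : ∀ x : Λ, (Fin.snoc g x : Fin (n+2) → Λ) 0 = g 0 := by
        intro x
        have : (0 : Fin (n+2)) = (0 : Fin (n+1)).castSucc := rfl
        rw [this, Fin.snoc_castSucc]
      calc ∑ x : Λ, (pathOp B (n+1) (Fin.snoc g x) * ρ ((Fin.snoc g x : Fin (n+2) → Λ) 0)
              * (pathOp B (n+1) (Fin.snoc g x))ᴴ).trace
          = ∑ x : Λ, ((B (g (Fin.last n)) x)ᴴ * (B (g (Fin.last n)) x)
              * (pathOp B n g * ρ (g 0) * (pathOp B n g)ᴴ)).trace := by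
            apply Finset.sum_congr rfl
            intro x _
            rw [pathOp_snoc, hz]
            rw [Matrix.conjTranspose_mul]
            rw [show B (g (Fin.last n)) x * pathOp B n g * ρ (g 0) *
                ((pathOp B n g)ᴴ * (B (g (Fin.last n)) x)ᴴ)
              = B (g (Fin.last n)) x * (pathOp B n g * ρ (g 0) * (pathOp B n g)ᴴ)
                * (B (g (Fin.last n)) x)ᴴ by simp only [mul_assoc]]
            rw [Matrix.trace_mul_cycle, ← mul_assoc]
        _ = (pathOp B n g * ρ (g 0) * (pathOp B n g)ᴴ).trace := by
            rw [← Matrix.trace_sum, ← Finset.sum_mul, hB, one_mul]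
end

section
/- Let Λ be a finite nonempty type, d ≥ 1, B : Λ → Λ → Matrix (Fin d) (Fin d) ℂ with ∑_{i∈Λ} (B_j^i)ᴴ * B_j^i = 1 for every j, and ρ : Λ → Matrix (Fin d) (Fin d) ℂ with each ρ_j positive semidefinite and Tr(ρ_j) a positive real. Set M_j^i := B_j^i ⊗ₖ E_{ij} and φ_{jj'}(b) := ((Tr ρ_j)^{1/2} (Tr ρ_{j'})^{1/2})⁻¹ · Tr(((ρ_j^{1/2} * ρ_{j'}^{1/2}) ⊗ₖ E_{j' j}) * b). Then for every k ≥ 1, the transition expectation formula is unital: ∑_{i,j,j'∈Λ} (φ_{jj'}(1))^k • ((M_j^i)ᴴ * M_{j'}^i) = 1. -/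
open Matrix Kronecker
open scoped ComplexOrder

/-- The positive semidefinite square root, as `Matrix.PosSemidef.sqrt` was defined in the
older Mathlib (removed since). -/
noncomputable def Matrix.PosSemidef.sqrt {n 𝕜 : Type*} [Fintype n] [DecidableEq n] [RCLike 𝕜]
    {A : Matrix n n 𝕜} (hA : A.PosSemidef) : Matrix n n 𝕜 :=
  hA.1.eigenvectorUnitary.1 * diagonal ((↑) ∘ (√·) ∘ hA.1.eigenvalues) *
    (star hA.1.eigenvectorUnitary : Matrix n n 𝕜)

lemma aux_sqrt_mul_self {d : ℕ} {A : Matrix (Fin d) (Fin d) ℂ} (hA : A.PosSemidef) :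
    hA.sqrt * hA.sqrt = A := by
  conv_rhs => rw [hA.1.spectral_theorem, Unitary.conjStarAlgAut_apply]
  unfold Matrix.PosSemidef.sqrt
  have hU : (star hA.1.eigenvectorUnitary : Matrix (Fin d) (Fin d) ℂ) * hA.1.eigenvectorUnitary.1
      = 1 := Unitary.coe_star_mul_self _
  simp only [Matrix.mul_assoc]
  rw [← Matrix.mul_assoc _ hA.1.eigenvectorUnitary.1, hU, Matrix.one_mul,
    ← Matrix.mul_assoc (diagonal _), diagonal_mul_diagonal]
  congr 3
  funext i
  simp only [Function.comp_apply]
  rw [← RCLike.ofReal_mul, Real.mul_self_sqrt (hA.eigenvalues_nonneg i)]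

/-- The functional `φ_{jj'}(b) = ((Tr ρ_j)^{1/2}(Tr ρ_{j'})^{1/2})⁻¹
Tr((ρ_j^{1/2} ρ_{j'}^{1/2} ⊗ₖ E_{j'j}) b)`. -/
noncomputable def phiJJ {Λ : Type*} [Fintype Λ] [DecidableEq Λ] {d : ℕ}
    (ρ : Λ → Matrix (Fin d) (Fin d) ℂ) (hρ : ∀ j, (ρ j).PosSemidef) (j j' : Λ)
    (b : Matrix (Fin d × Λ) (Fin d × Λ) ℂ) : ℂ :=
  ((Real.sqrt (ρ j).trace.re * Real.sqrt (ρ j').trace.re : ℝ) : ℂ)⁻¹ *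
    ((((hρ j).sqrt * (hρ j').sqrt) ⊗ₖ single j' j (1 : ℂ)) * b).trace

/-- The dilated operator `M_j^i = B_j^i ⊗ₖ E_{ij}`. -/
noncomputable def Mop {Λ : Type*} [Fintype Λ] [DecidableEq Λ] {d : ℕ}
    (B : Λ → Λ → Matrix (Fin d) (Fin d) ℂ) (j i : Λ) :
    Matrix (Fin d × Λ) (Fin d × Λ) ℂ :=
  B j i ⊗ₖ single i j (1 : ℂ)

/-- The sum of diagonal elementary matrices is the identity. -/
lemma aux_sum_stdBasisMatrix_diag {Λ : Type*} [Fintype Λ] [DecidableEq Λ] :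
    ∑ j : Λ, single j j (1 : ℂ) = 1 := by
  ext a b
  by_cases h : a = b
  · subst h
    simp [Matrix.sum_apply, single, one_apply, Finset.filter_eq']
  · simp only [Matrix.sum_apply, single, of_apply, one_apply, h, if_false]
    refine Finset.sum_eq_zero fun j _ => ?_
    rw [if_neg]
    rintro ⟨rfl, rfl⟩; exact h rfl

/-- Kronecker product commutes with conjugate transpose. -/
lemma aux_kron_conjTranspose {Λ : Type*} [Fintype Λ] [DecidableEq Λ] {d : ℕ}
    (A : Matrix (Fin d) (Fin d) ℂ) (C : Matrix Λ Λ ℂ) :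
    (A ⊗ₖ C)ᴴ = Aᴴ ⊗ₖ Cᴴ := by
  ext ⟨a, b⟩ ⟨c, e⟩
  simp [conjTranspose_apply, mul_comm]

lemma aux_stdBasisMatrix_conjTranspose {Λ : Type*} [Fintype Λ] [DecidableEq Λ] (i j : Λ) :
    (single i j (1 : ℂ))ᴴ = single j i 1 := by
  ext a b
  simp [conjTranspose_apply, single, and_comm]

lemma aux_sum_kron {Λ : Type*} [Fintype Λ] [DecidableEq Λ] {d : ℕ} (s : Finset Λ)
    (f : Λ → Matrix (Fin d) (Fin d) ℂ) (C : Matrix Λ Λ ℂ) :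
    (∑ i ∈ s, f i) ⊗ₖ C = ∑ i ∈ s, f i ⊗ₖ C := by
  ext ⟨a, b⟩ ⟨c, e⟩
  simp [Matrix.sum_apply, Finset.sum_mul]

lemma aux_kron_sum {Λ : Type*} [Fintype Λ] [DecidableEq Λ] {d : ℕ} (s : Finset Λ)
    (A : Matrix (Fin d) (Fin d) ℂ) (f : Λ → Matrix Λ Λ ℂ) :
    A ⊗ₖ (∑ i ∈ s, f i) = ∑ i ∈ s, A ⊗ₖ f i := by
  ext ⟨a, b⟩ ⟨c, e⟩
  simp [Matrix.sum_apply, Finset.mul_sum]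

lemma aux_phi_one {Λ : Type*} [Fintype Λ] [DecidableEq Λ] {d : ℕ}
    (ρ : Λ → Matrix (Fin d) (Fin d) ℂ) (hρ : ∀ j, (ρ j).PosSemidef)
    (hTr : ∀ j, 0 < (ρ j).trace) (j j' : Λ) :
    phiJJ ρ hρ j j' 1 = if j = j' then 1 else 0 := by
  unfold phiJJ
  rw [mul_one, trace_kronecker]
  by_cases h : j = j'
  · subst h
    rw [if_pos rfl, Matrix.trace_single_eq_same, aux_sqrt_mul_self (hρ j)]
    have hre := hTr j
    rw [Complex.pos_iff] at hre
    have h1 : ((ρ j).trace.re : ℂ) = (ρ j).trace := Complex.ext rfl (by simp [hre.2])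
    rw [Real.mul_self_sqrt hre.1.le, h1, mul_one]
    exact inv_mul_cancel₀ (hTr j).ne'
  · rw [Matrix.trace_single_eq_of_ne j' j (1:ℂ) (Ne.symm h), if_neg h]
    simp

/-- the transition expectation of the QMC on the Cayley tree of order `k`
is unital: `∑ i j j', (φ_{jj'}(1))^k • ((M_j^i)ᴴ * M_{j'}^i) = 1`. -/
theorem stmt_8 {Λ : Type*} [Fintype Λ] [DecidableEq Λ] [Nonempty Λ] {d : ℕ} (hd : 1 ≤ d)
    (B : Λ → Λ → Matrix (Fin d) (Fin d) ℂ)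
    (hB : ∀ j : Λ, ∑ i : Λ, (B j i)ᴴ * B j i = 1)
    (ρ : Λ → Matrix (Fin d) (Fin d) ℂ) (hρ : ∀ j, (ρ j).PosSemidef)
    (hTr : ∀ j, 0 < (ρ j).trace) (k : ℕ) (hk : 1 ≤ k) :
    ∑ i : Λ, ∑ j : Λ, ∑ j' : Λ,
        (phiJJ ρ hρ j j' 1) ^ k • ((Mop B j i)ᴴ * Mop B j' i) = 1 := by
  have hkne : k ≠ 0 := by omega
  have hreduce : ∀ i : Λ, ∑ j : Λ, ∑ j' : Λ,
      (phiJJ ρ hρ j j' 1) ^ k • ((Mop B j i)ᴴ * Mop B j' i)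
      = ∑ j : Λ, (Mop B j i)ᴴ * Mop B j i := by
    intro i
    refine Finset.sum_congr rfl fun j _ => ?_
    have : ∀ j' : Λ, (phiJJ ρ hρ j j' 1) ^ k • ((Mop B j i)ᴴ * Mop B j' i)
        = if j = j' then (Mop B j i)ᴴ * Mop B j' i else 0 := by
      intro j'
      rw [aux_phi_one ρ hρ hTr j j']
      by_cases h : j = j'
      · simp [h]
      · simp [h, zero_pow hkne]
    simp only [this]
    simp [Finset.sum_ite_eq]
  simp only [hreduce]
  rw [Finset.sum_comm]
  have hjj : ∀ j : Λ, ∑ i : Λ, (Mop B j i)ᴴ * Mop B j i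
      = (1 : Matrix (Fin d) (Fin d) ℂ) ⊗ₖ single j j (1 : ℂ) := by
    intro j
    have step : ∀ i : Λ, (Mop B j i)ᴴ * Mop B j i
        = ((B j i)ᴴ * B j i) ⊗ₖ single j j (1 : ℂ) := by
      intro i
      unfold Mop
      rw [aux_kron_conjTranspose, aux_stdBasisMatrix_conjTranspose, ← mul_kronecker_mul,
        single_mul_single_same, mul_one]
    simp only [step]
    rw [← aux_sum_kron, hB j]
  simp only [hjj]
  rw [← aux_kron_sum, aux_sum_stdBasisMatrix_diag]
  exact one_kronecker_one
end

section
/- Let Λ be a finite nonempty type, d ≥ 1, B : Λ → Λ → Matrix (Fin d) (Fin d) ℂ with ∑_{i∈Λ} (B_j^i)ᴴ * B_j^i = 1 for every j, M_j^i := B_j^i ⊗ₖ E_{ij}, and 𝓜_j(a) := ∑_{i∈Λ} (M_j^i)ᴴ * a * M_j^i. Let b ∈ Matrix (Fin d × Λ) (Fin d × Λ) ℂ be such that both b and 1 − b are positive semidefinite, let p ≥ 0 be a real number, and let c : Λ → ℝ with 0 ≤ c_j ≤ p for all j. Then for every n ∈ ℕ, the matrix (p^n) • 1 − ∑_{j∈Λ}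 (c_j)^n • 𝓜_j(b) is positive semidefinite. -/
open Matrix Kronecker
open scoped ComplexOrder

section aux

variable {n : Type*} [Fintype n]

lemma psd_add {A B : Matrix n n ℂ} (hA : A.PosSemidef) (hB : B.PosSemidef) :
    (A + B).PosSemidef :=
  hA.add hB

lemma psd_smul {A : Matrix n n ℂ} (hA : A.PosSemidef) {r : ℝ} (hr : 0 ≤ r) :
    (((r : ℂ)) • A).PosSemidef := by
  exact hA.smul (Complex.zero_le_real.mpr hr)

lemma psd_sum {ι : Type*} (s : Finset ι) (f : ι → Matrix n n ℂ)
    (h : ∀ i ∈ s, (f i).PosSemidef) : (∑ i ∈ s, f i).PosSemidef := by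
  classical
  induction s using Finset.induction_on with
  | empty => simpa using Matrix.PosSemidef.zero
  | insert _ _ hi ih =>
    rw [Finset.sum_insert hi]
    exact psd_add (h _ (Finset.mem_insert_self _ _))
      (ih fun i his => h i (Finset.mem_insert_of_mem his))

lemma kronecker_conjT {l m : Type*} (A : Matrix l l ℂ) (C : Matrix m m ℂ) :
    (A ⊗ₖ C)ᴴ = Aᴴ ⊗ₖ Cᴴ := by
  ext x y
  simp [conjTranspose_apply, kroneckerMap_apply, star_mul']

lemma stdBasis_conjT {m : Type*} [Fintype m] [DecidableEq m] (i j : m) :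
    (single i j (1 : ℂ))ᴴ = single j i (1 : ℂ) := by
  ext x y
  simp [conjTranspose_apply, single, and_comm]

lemma sum_kron {l m : Type*} {ι : Type*} (s : Finset ι)
    (f : ι → Matrix l l ℂ) (C : Matrix m m ℂ) :
    (∑ i ∈ s, f i) ⊗ₖ C = ∑ i ∈ s, f i ⊗ₖ C := by
  ext x y
  simp [kroneckerMap_apply, Matrix.sum_apply, Finset.sum_mul]

lemma kron_sum {l m : Type*} {ι : Type*} (s : Finset ι)
    (A : Matrix l l ℂ) (f : ι → Matrix m m ℂ) :
    A ⊗ₖ (∑ i ∈ s, f i) = ∑ i ∈ s, A ⊗ₖ f i := by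
  ext x y
  simp [kroneckerMap_apply, Matrix.sum_apply, Finset.mul_sum]

end aux

lemma Mop_sum_self {Λ : Type*} [Fintype Λ] [DecidableEq Λ] {d : ℕ}
    (B : Λ → Λ → Matrix (Fin d) (Fin d) ℂ)
    (hB : ∀ j : Λ, ∑ i : Λ, (B j i)ᴴ * B j i = 1) (j : Λ) :
    ∑ i : Λ, (Mop B j i)ᴴ * Mop B j i
      = (1 : Matrix (Fin d) (Fin d) ℂ) ⊗ₖ single j j (1 : ℂ) := by
  have : ∀ i : Λ, (Mop B j i)ᴴ * Mop B j i
      = ((B j i)ᴴ * B j i) ⊗ₖ single j j (1 : ℂ) := by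
    intro i
    rw [Mop, kronecker_conjT, stdBasis_conjT, ← mul_kronecker_mul,
      single_mul_single_same, one_mul]
  rw [Finset.sum_congr rfl fun i _ => this i, ← sum_kron, hB j]

lemma sum_one_kronecker_std {Λ : Type*} [Fintype Λ] [DecidableEq Λ] {d : ℕ} :
    ∑ j : Λ, (1 : Matrix (Fin d) (Fin d) ℂ) ⊗ₖ single j j (1 : ℂ)
      = (1 : Matrix (Fin d × Λ) (Fin d × Λ) ℂ) := by
  rw [← kron_sum]
  have : ∑ j : Λ, single j j (1 : ℂ) = (1 : Matrix Λ Λ ℂ) := by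
    ext x y
    rw [Matrix.sum_apply]
    by_cases h : x = y
    · subst h
      simp [single, Matrix.one_apply, Finset.sum_ite_eq]
    · simp only [single, Matrix.one_apply, h, if_false, of_apply]
      rw [Finset.sum_eq_zero]
      intro i _
      rw [if_neg]
      rintro ⟨rfl, rfl⟩
      exact h rfl
  rw [this, one_kronecker_one]

/-- the Loewner-order bound `∑ j, c_j^n • 𝓜_j(b) ≤ p^n • 1` for
`0 ≤ b ≤ 1`, `0 ≤ c_j ≤ p`, where `𝓜_j(a) = ∑ i, (M_j^i)ᴴ a M_j^i`. -/
theorem stmt_12 {Λ : Type*} [Fintype Λ] [DecidableEq Λ] [Nonempty Λ] {d : ℕ} (hd : 1 ≤ d)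
    (B : Λ → Λ → Matrix (Fin d) (Fin d) ℂ)
    (hB : ∀ j : Λ, ∑ i : Λ, (B j i)ᴴ * B j i = 1)
    (b : Matrix (Fin d × Λ) (Fin d × Λ) ℂ)
    (hb : b.PosSemidef) (hb1 : (1 - b).PosSemidef)
    (p : ℝ) (hp : 0 ≤ p) (c : Λ → ℝ) (hc0 : ∀ j, 0 ≤ c j) (hcp : ∀ j, c j ≤ p) (n : ℕ) :
    (((p ^ n : ℝ) : ℂ) • (1 : Matrix (Fin d × Λ) (Fin d × Λ) ℂ) -
        ∑ j : Λ, ((c j ^ n : ℝ) : ℂ) • ∑ i : Λ, (Mop B j i)ᴴ * b * Mop B j i).PosSemidef := by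
  set E : Λ → Matrix (Fin d × Λ) (Fin d × Λ) ℂ :=
    fun j => (1 : Matrix (Fin d) (Fin d) ℂ) ⊗ₖ single j j (1 : ℂ) with hE
  set S : Λ → Matrix (Fin d × Λ) (Fin d × Λ) ℂ :=
    fun j => ∑ i : Λ, (Mop B j i)ᴴ * b * Mop B j i with hS
  have hone : (((p ^ n : ℝ) : ℂ)) • (1 : Matrix (Fin d × Λ) (Fin d × Λ) ℂ)
      = ∑ j : Λ, ((p ^ n : ℝ) : ℂ) • E j := by
    rw [← Finset.smul_sum, hE, sum_one_kronecker_std]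
  rw [hone, ← Finset.sum_sub_distrib]
  refine psd_sum _ _ fun j _ => ?_
  have hdiff : E j - S j = ∑ i : Λ, (Mop B j i)ᴴ * (1 - b) * Mop B j i := by
    have : ∀ i : Λ, (Mop B j i)ᴴ * (1 - b) * Mop B j i
        = (Mop B j i)ᴴ * Mop B j i - (Mop B j i)ᴴ * b * Mop B j i := by
      intro i
      rw [mul_sub, sub_mul, mul_one]
    rw [Finset.sum_congr rfl fun i _ => this i, Finset.sum_sub_distrib,
      Mop_sum_self B hB j, hS]
  have hEpsd : (E j).PosSemidef := by
    show ((1 : Matrix (Fin d) (Fin d) ℂ) ⊗ₖ single j j (1 : ℂ)).PosSemidef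
    rw [← Mop_sum_self B hB j]
    exact psd_sum _ _ fun i _ => posSemidef_conjTranspose_mul_self _
  have hdiffpsd : (E j - S j).PosSemidef := by
    rw [hdiff]
    exact psd_sum _ _ fun i _ => hb1.conjTranspose_mul_mul_same _
  have hcn : c j ^ n ≤ p ^ n := pow_le_pow_left₀ (hc0 j) (hcp j) n
  have key : ((p ^ n : ℝ) : ℂ) • E j - ((c j ^ n : ℝ) : ℂ) • S j
      = (((p ^ n - c j ^ n : ℝ)) : ℂ) • E j + ((c j ^ n : ℝ) : ℂ) • (E j - S j) := by
    push_cast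
    rw [smul_sub, sub_smul]
    ring_nf
    abel
  rw [key]
  exact psd_add (psd_smul hEpsd (by linarith)) (psd_smul hdiffpsd (pow_nonneg (hc0 j) n))
end
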